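/- For any distinct i, j, k ∈ {1,2,3}, the image under φᵢⱼ of the subgroup of A generated by {m₁, m₂, m₃} equals the subgroup generated by {mᵢ + eⱼ, mⱼ + eᵢ, mₖ}, and this image is a different subgroup from the one generated by {m₁, m₂, m₃}; i.e. no S-domain wall condenses on the all-smooth (m₁, m₂, m₃)-boundary, and attaching s⁽²⁾ᵢⱼ produces the nested boundary (mᵢeⱼ, mⱼeᵢ, mₖ). -/
import Mathlib


/-- The group of topological excitations of three copies of the 3D toric code:
pairs (a, b) of electric/magnetic labels in `(ZMod 2)³`. -/
abbrev A : Type := (Fin 3 → ZMod 2) × (Fin 3 → ZMod 2)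

/-- The electric charge `eᵢ`. -/
def e (i : Fin 3) : A := (Pi.single i 1, 0)

/-- The magnetic flux `mᵢ`. -/
def m (i : Fin 3) : A := (0, Pi.single i 1)

/-- The mutual-statistics pairing `ω((a,b),(a',b')) = a·b' + a'·b`. -/
def ω (x y : A) : ZMod 2 :=
  (∑ t, x.1 t * y.2 t) + (∑ t, y.1 t * x.2 t)

/-- The action of the S-domain wall `s⁽²⁾ᵢⱼ` on excitations:
`(a, b) ↦ (a + bⱼ•δᵢ + bᵢ•δⱼ, b)`. -/
def φ (i j : Fin 3) (x : A) : A :=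
  (x.1 + x.2 j • (Pi.single i 1 : Fin 3 → ZMod 2) + x.2 i • (Pi.single j 1 : Fin 3 → ZMod 2), x.2)

/-- A subgroup `L` of `A` is Lagrangian if it equals its orthogonal complement
with respect to the pairing `ω`. -/
def IsLagrangian (L : AddSubgroup A) : Prop :=
  (L : Set A) = {x : A | ∀ l ∈ L, ω x l = 0}


def φhom (i j : Fin 3) : A →+ A where
  toFun := φ i j
  map_zero' := by simp [φ]
  map_add' x y := by
    simp only [φ, Prod.fst_add, Prod.snd_add, Pi.add_apply, Prod.mk_add_mk, Prod.mk.injEq,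
      add_smul]
    exact ⟨by abel, trivial⟩

theorem stmt_15 (i j k : Fin 3) (hij : i ≠ j) (hjk : j ≠ k) (hik : i ≠ k) :
    φ i j '' ((AddSubgroup.closure {m 0, m 1, m 2} : AddSubgroup A) : Set A) =
      ((AddSubgroup.closure {m i + e j, m j + e i, m k} : AddSubgroup A) : Set A) ∧
    AddSubgroup.closure {m i + e j, m j + e i, m k} ≠
      AddSubgroup.closure {m 0, m 1, m 2} := by
  have hset : ({m 0, m 1, m 2} : Set A) = {m i, m j, m k} := by
    fin_cases i <;> fin_cases j <;> fin_cases k <;> simp_all <;>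
      · ext x; simp [Set.mem_insert_iff]; tauto
  have h1 : φ i j (m i) = m i + e j := by
    simp [φ, m, e, Pi.single_eq_of_ne hij.symm, Prod.ext_iff]
  have h2 : φ i j (m j) = m j + e i := by
    simp [φ, m, e, Pi.single_eq_of_ne hij, Prod.ext_iff]
  have h3 : φ i j (m k) = m k := by
    simp [φ, m, Pi.single_eq_of_ne hik, Pi.single_eq_of_ne hjk, Prod.ext_iff]
  constructor
  · have : φ i j '' ((AddSubgroup.closure {m 0, m 1, m 2} : AddSubgroup A) : Set A)
        = ((AddSubgroup.map (φhom i j) (AddSubgroup.closure {m 0, m 1, m 2}) : AddSubgroup A) : Set A) := by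
      rfl
    rw [this, hset, AddMonoidHom.map_closure]
    rw [Set.image_insert_eq, Set.image_insert_eq, Set.image_singleton,
      show (φhom i j) (m i) = m i + e j from h1,
      show (φhom i j) (m j) = m j + e i from h2,
      show (φhom i j) (m k) = m k from h3]
  · intro hEq
    have hmem : m i + e j ∈ AddSubgroup.closure ({m 0, m 1, m 2} : Set A) := by
      rw [← hEq]
      exact AddSubgroup.subset_closure (Set.mem_insert _ _)
    have hsub : AddSubgroup.closure ({m 0, m 1, m 2} : Set A) ≤
        (⊥ : AddSubgroup (Fin 3 → ZMod 2)).prod ⊤ := by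
      rw [AddSubgroup.closure_le]
      intro x hx
      rcases hx with h | h | h <;> subst h <;>
        simp [m, AddSubgroup.mem_prod]
    have := hsub hmem
    rw [AddSubgroup.mem_prod] at this
    have h0 : (m i + e j).1 = 0 := this.1
    have : (Pi.single j 1 : Fin 3 → ZMod 2) j = 0 := by
      rw [show (Pi.single j 1 : Fin 3 → ZMod 2) = (m i + e j).1 by simp [m, e], h0]
      simp
    simp at this
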